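/- For every x ∈ E, every δ = (δ_1,…,δ_n) with δ_i ≥ 0, every δ-inexact update T at x, and every index i ∈ {1,…,n}, one has F(x + U_i T_i) ≤ F(x). -/

import Mathlib

open scoped RealInnerProductSpace
open MeasureTheory

noncomputable section

variable {n : ℕ} {E : Fin n → Type*} [∀ i, NormedAddCommGroup (E i)]
  [∀ i, InnerProductSpace ℝ (E i)] [∀ i, FiniteDimensional ℝ (E i)]

/-- `U i t`: embedding of the `i`-th block into the product space `E = E₁ × ⋯ × Eₙ`
(the vector with `i`-th block equal to `t` and all other blocks zero). -/
def blockEmbed (i : Fin n) (t : E i) : PiLp 2 E :=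
  (WithLp.equiv 2 (∀ j, E j)).symm (Pi.single i t)

/-- `V_i(x,t) = ⟨∇_i f(x), t⟩ + (L_i/2)‖t‖² + Ψ_i(x_i + t)`. -/
def Vi (f : PiLp 2 E → ℝ) (L : Fin n → ℝ) (Ψ : ∀ i, E i → ℝ)
    (x : PiLp 2 E) (i : Fin n) (t : E i) : ℝ :=
  ⟪(gradient f x) i, t⟫ + L i / 2 * ‖t‖ ^ 2 + Ψ i (x i + t)

/-- `T` is a `δ`-inexact update at `x`:
`V_i(x, T_i) ≤ min{V_i(x,0), δ_i + inf_t V_i(x,t)}` for every block `i`. -/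
def IsInexactUpdate (f : PiLp 2 E → ℝ) (L : Fin n → ℝ) (Ψ : ∀ i, E i → ℝ)
    (δ : Fin n → ℝ) (x T : PiLp 2 E) : Prop :=
  ∀ i, Vi f L Ψ x i (T i) ≤ min (Vi f L Ψ x i 0) (δ i + ⨅ t : E i, Vi f L Ψ x i t)

/-- `H(x,T) = f(x) + ⟨∇f(x), T⟩ + (1/2)‖T‖_L² + Ψ(x+T)`. -/
def Hfun (f : PiLp 2 E → ℝ) (L : Fin n → ℝ) (Ψ : ∀ i, E i → ℝ) (x T : PiLp 2 E) : ℝ :=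
  f x + ⟪gradient f x, T⟫ + (1/2) * ∑ i, L i * ‖T i‖ ^ 2 + ∑ i, Ψ i (x i + T i)

/-- `F = f + Ψ` where `Ψ(x) = Σ_i Ψ_i(x_i)`. -/
def Ffun (f : PiLp 2 E → ℝ) (Ψ : ∀ i, E i → ℝ) (x : PiLp 2 E) : ℝ :=
  f x + ∑ i, Ψ i (x i)


set_option linter.unusedSectionVars false

lemma blockEmbed_apply_self (i : Fin n) (t : E i) : blockEmbed i t i = t := by
  simp [blockEmbed]

lemma blockEmbed_apply_ne (i j : Fin n) (t : E i) (h : j ≠ i) : blockEmbed i t j = 0 := by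
  simp [blockEmbed, Pi.single_eq_of_ne h]

lemma blockEmbed_smul (i : Fin n) (s : ℝ) (t : E i) :
    blockEmbed i (s • t) = s • blockEmbed i t := by
  ext j
  by_cases h : j = i
  · subst h; simp [blockEmbed]
  · simp [blockEmbed, Pi.single_eq_of_ne h]

lemma inner_blockEmbed (y : PiLp 2 E) (i : Fin n) (t : E i) :
    ⟪y, blockEmbed i t⟫ = ⟪y i, t⟫ := by
  rw [PiLp.inner_apply, Finset.sum_eq_single i]
  · rw [blockEmbed_apply_self]
  · intro j _ hj; rw [blockEmbed_apply_ne i j t hj, inner_zero_right]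
  · simp

/-- Block descent lemma: `f(x + Uᵢt) ≤ f(x) + ⟪∇ᵢf(x), t⟫ + (Lᵢ/2)‖t‖²`. -/
lemma descent_lemma (L : Fin n → ℝ) (f : PiLp 2 E → ℝ) (hfdiff : Differentiable ℝ f)
    (hLip : ∀ (x : PiLp 2 E) (i : Fin n) (t : E i),
      ‖(gradient f (x + blockEmbed i t)) i - (gradient f x) i‖ ≤ L i * ‖t‖)
    (x : PiLp 2 E) (i : Fin n) (t : E i) :
    f (x + blockEmbed i t) ≤ f x + ⟪(gradient f x) i, t⟫ + L i / 2 * ‖t‖ ^ 2 := by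
  set v : PiLp 2 E := blockEmbed i t with hv
  set a : ℝ := ⟪(gradient f x) i, t⟫ with ha
  have hc : ∀ s : ℝ, HasDerivAt (fun s : ℝ => x + s • v) v s := by
    intro s
    simpa using ((hasDerivAt_id s).smul_const v).const_add x
  have hφ : ∀ s : ℝ, HasDerivAt (fun s : ℝ => f (x + s • v))
      (⟪(gradient f (x + s • v)) i, t⟫) s := by
    intro s
    have h2 : HasFDerivAt f
        (InnerProductSpace.toDual ℝ _ (gradient f (x + s • v))) (x + s • v) :=
      hasGradientAt_iff_hasFDerivAt.mp (hfdiff (x + s • v)).hasGradientAt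
    have := h2.comp_hasDerivAt s (hc s)
    simpa only [Function.comp_def, InnerProductSpace.toDual_apply_apply, hv, inner_blockEmbed]
      using this
  set h : ℝ → ℝ := fun s => f x + s * a + L i * ‖t‖ ^ 2 * s ^ 2 / 2 - f (x + s • v) with hh
  have hh' : ∀ s : ℝ, HasDerivAt h
      (a + L i * ‖t‖ ^ 2 * s - ⟪(gradient f (x + s • v)) i, t⟫) s := by
    intro s
    have h1 : HasDerivAt (fun s : ℝ => f x + s * a + L i * ‖t‖ ^ 2 * s ^ 2 / 2)
        (a + L i * ‖t‖ ^ 2 * s) s := by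
      have := (((hasDerivAt_id s).mul_const a).const_add (f x)).add
        ((((hasDerivAt_id s).pow 2).const_mul (L i * ‖t‖ ^ 2)).div_const 2)
      convert this using 1
      case e'_8 => funext s; simp [id]
      case e'_9 => simp [id]; ring
      all_goals rfl
    exact h1.sub (hφ s)
  have hderiv_nonneg : ∀ s ∈ Set.Ioo (0:ℝ) 1, 0 ≤ deriv h s := by
    intro s hs
    rw [(hh' s).deriv]
    have hsv : x + s • v = x + blockEmbed i (s • t) := by rw [blockEmbed_smul]
    have key : ⟪(gradient f (x + s • v)) i, t⟫ ≤ a + L i * ‖t‖ ^ 2 * s := by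
      have h1 : ⟪(gradient f (x + s • v)) i - (gradient f x) i, t⟫ ≤
          ‖(gradient f (x + s • v)) i - (gradient f x) i‖ * ‖t‖ := real_inner_le_norm _ _
      have h2 : ‖(gradient f (x + s • v)) i - (gradient f x) i‖ ≤ L i * ‖s • t‖ := by
        rw [hsv]; exact hLip x i (s • t)
      have h3 : ‖s • t‖ = s * ‖t‖ := by
        rw [norm_smul, Real.norm_eq_abs, abs_of_pos hs.1]
      have := h1.trans (mul_le_mul_of_nonneg_right h2 (norm_nonneg t))
      rw [inner_sub_left] at this
      rw [h3] at this
      nlinarith [this]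
    linarith
  have hmono : MonotoneOn h (Set.Icc 0 1) := by
    apply monotoneOn_of_deriv_nonneg (convex_Icc 0 1)
    · exact Continuous.continuousOn (by
        have : Differentiable ℝ h := fun s => (hh' s).differentiableAt
        exact this.continuous)
    · intro s _; exact (hh' s).differentiableAt.differentiableWithinAt
    · intro s hs
      rw [interior_Icc] at hs
      exact hderiv_nonneg s hs
  have h01 : h 0 ≤ h 1 := hmono (by norm_num) (by norm_num) (by norm_num)
  have h0 : h 0 = 0 := by simp [hh]
  have h1 : h 1 = f x + a + L i * ‖t‖ ^ 2 / 2 - f (x + v) := by simp [hh]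
  rw [h0, h1] at h01
  linarith

/-- Monotonicity of an inexact coordinate descent step:
`F(x + U_i T_i) ≤ F(x)` for any `δ`-inexact update `T` and any block `i`. -/
theorem inexact_update_monotone
    (hn : 0 < n)
    (L : Fin n → ℝ) (hL : ∀ i, 0 < L i)
    (f : PiLp 2 E → ℝ) (hfdiff : Differentiable ℝ f) (hfconv : ConvexOn ℝ Set.univ f)
    (hLip : ∀ (x : PiLp 2 E) (i : Fin n) (t : E i),
      ‖(gradient f (x + blockEmbed i t)) i - (gradient f x) i‖ ≤ L i * ‖t‖)
    (Ψ : ∀ i, E i → ℝ) (hΨconv : ∀ i, ConvexOn ℝ Set.univ (Ψ i))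
    (hΨcont : ∀ i, Continuous (Ψ i))
    (x : PiLp 2 E) (δ : Fin n → ℝ) (hδ : ∀ i, 0 ≤ δ i)
    (T : PiLp 2 E) (hT : IsInexactUpdate f L Ψ δ x T) (i : Fin n) :
    Ffun f Ψ (x + blockEmbed i (T i)) ≤ Ffun f Ψ x := by
  have hdesc := descent_lemma L f hfdiff hLip x i (T i)
  have hVi : Vi f L Ψ x i (T i) ≤ Ψ i (x i) := by
    have := (hT i).trans (min_le_left _ _)
    simpa [Vi] using this
  have hsum : ∑ j, Ψ j ((x + blockEmbed i (T i)) j)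
      = ∑ j, Ψ j (x j) + (Ψ i (x i + T i) - Ψ i (x i)) := by
    have key : ∑ j, (Ψ j ((x + blockEmbed i (T i)) j) - Ψ j (x j))
        = Ψ i (x i + T i) - Ψ i (x i) := by
      rw [Finset.sum_eq_single i]
      · rw [PiLp.add_apply, blockEmbed_apply_self]
      · intro j _ hj
        rw [PiLp.add_apply, blockEmbed_apply_ne i j (T i) hj, add_zero, sub_self]
      · simp
    rw [Finset.sum_sub_distrib] at key
    linarith
  unfold Ffun
  rw [hsum]
  unfold Vi at hVi
  linarith
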